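/- Let G be a finite simple graph with a perfect matching on 2n vertices, and let S be the polynomial ring over a field K in the 2n vertex variables. Then 2k − 1 ≤ dim S/I(G)^{[k]} ≤ n + k − 1 for all 1 ≤ k ≤ ν(G) = n. In particular, if n ≥ 2, then dim S/I(G)^{[n−1]} ∈ {2n − 3, 2n − 2}. -/

import Mathlib

open MvPolynomial

noncomputable section

namespace Paper

variable (K : Type) [Field K] (V : Type) [Fintype V] [DecidableEq V]

/-- The polynomial ring `S = K[x_v : v ∈ V]`. -/
abbrev Poly := MvPolynomial V K

/-- The graded maximal ideal `𝔪 = (x_v : v ∈ V)`. -/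
def maxIdeal : Ideal (Poly K V) := Ideal.span (Set.range X)

/-- The depth of `S/I` : the maximal length of a regular sequence on `S/I`
consisting of elements of the graded maximal ideal. -/
def smodDepth (I : Ideal (Poly K V)) : ℕ :=
  sSup {r : ℕ | ∃ rs : List (Poly K V), rs.length = r ∧ (∀ x ∈ rs, x ∈ maxIdeal K V) ∧
    RingTheory.Sequence.IsRegular (Poly K V ⧸ I) rs}

/-- `I` is Cohen-Macaulay if `depth S/I = dim S/I`. -/
def IsCM (I : Ideal (Poly K V)) : Prop :=
  ((smodDepth K V I : ℕ∞) : WithBot ℕ∞) = ringKrullDim (Poly K V ⧸ I)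

/-- The height of an ideal: the infimum of the heights of the primes containing it. -/
def idealHeight (I : Ideal (Poly K V)) : ℕ∞ :=
  ⨅ (P : PrimeSpectrum (Poly K V)) (_ : I ≤ P.asIdeal), Order.height P

variable {V}

/-- A `k`-matching of `G`, recorded as `k` edges (ordered pairs) with pairwise
disjoint vertex sets. -/
def IsMatchingOn (G : SimpleGraph V) {k : ℕ} (f : Fin k → V × V) : Prop :=
  (∀ i, G.Adj (f i).1 (f i).2) ∧
  Pairwise fun i j => ({(f i).1, (f i).2} : Set V) ∩ {(f j).1, (f j).2} = ∅

variable (V)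

/-- The matching number `ν(G)`. -/
def matchingNumber (G : SimpleGraph V) : ℕ :=
  sSup {k : ℕ | ∃ f : Fin k → V × V, IsMatchingOn G f}

/-- The edge ideal `I(G)`. -/
def edgeIdeal (G : SimpleGraph V) : Ideal (Poly K V) :=
  Ideal.span {p : Poly K V | ∃ a b : V, G.Adj a b ∧ p = X a * X b}

/-- The `k`-th matching power `I(G)^{[k]}`, generated by the products of the
edges of the `k`-matchings of `G`. -/
def matchPow (G : SimpleGraph V) (k : ℕ) : Ideal (Poly K V) :=
  Ideal.span {p : Poly K V | ∃ f : Fin k → V × V, IsMatchingOn G f ∧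
    p = ∏ i, (X (f i).1 * X (f i).2)}

/-- The squarefree Veronese ideal `𝔪^{[k]}`, generated by all squarefree
monomials of degree `k`. -/
def sqVeronese (k : ℕ) : Ideal (Poly K V) :=
  Ideal.span {p : Poly K V | ∃ s : Finset V, s.card = k ∧ p = ∏ i ∈ s, X i}

variable {V}

/-- Deletion of a set of vertices (keeping the ambient vertex set, so that all
edge ideals live in the same polynomial ring). -/
def delVerts (G : SimpleGraph V) (W : Set V) : SimpleGraph V where
  Adj a b := G.Adj a b ∧ a ∉ W ∧ b ∉ W
  symm := ⟨fun a b h => ⟨h.1.symm, h.2.2, h.2.1⟩⟩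
  loopless := ⟨fun a h => G.loopless.irrefl a h.1⟩

/-- `G` has a perfect matching. -/
def HasPerfectMatching (G : SimpleGraph V) : Prop :=
  ∃ (k : ℕ) (f : Fin k → V × V), IsMatchingOn G f ∧
    ∀ v : V, ∃ i, v = (f i).1 ∨ v = (f i).2

/-- `G` is a Cohen-Macaulay forest: a forest whose edge ideal is Cohen-Macaulay. -/
def IsCMForest (G : SimpleGraph V) : Prop :=
  G.IsAcyclic ∧ IsCM K V (edgeIdeal K V G)


/-! ### Auxiliary machinery -/

section AuxCL

variable {R : Type*} [CommRing R]

/-- The Coquand–Lombardi nested expression. -/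
def nest : List (R × R × ℕ) → R
  | [] => 1
  | p :: t => p.1 ^ p.2.2 * (nest t + p.2.1 * p.1)

lemma nest_notMem (P : ℕ → Ideal R) (hmono : ∀ i, P i ≤ P (i + 1))
    (hpr : ∀ i, (P i).IsPrime) (ys : List (R × R × ℕ))
    (hys : ∀ (i : ℕ) (h : i < ys.length), ys[i].1 ∈ P (i + 1) ∧ ys[i].1 ∉ P i) :
    nest ys ∉ P 0 := by
  induction ys generalizing P with
  | nil =>
    simp only [nest]
    intro h1
    exact (hpr 0).ne_top ((Ideal.eq_top_iff_one _).mpr h1)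
  | cons p t ih =>
    have ht : nest t ∉ P 1 :=
      ih (fun i => P (i + 1)) (fun i => hmono _) (fun i => hpr _)
        (fun i h => by exact hys (i + 1) (by simpa using Nat.succ_lt_succ h))
    have hx1 : p.1 ∈ P 1 := (hys 0 (by simp)).1
    have hx0 : p.1 ∉ P 0 := (hys 0 (by simp)).2
    intro hmem
    rcases (hpr 0).mem_or_mem hmem with h | h
    · exact hx0 ((hpr 0).mem_of_pow_mem _ h)
    · have h1 : nest t + p.2.1 * p.1 ∈ P 1 := hmono 0 h
      have h2 : nest t ∈ P 1 := by
        have h3 := (P 1).sub_mem h1 (Ideal.mul_mem_left _ p.2.1 hx1)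
        simpa using h3
      exact ht h2

lemma length_le_of_nest (ℓ : ℕ)
    (h : ∀ x : Fin (ℓ + 1) → R, ∃ (a : Fin (ℓ + 1) → R) (m : Fin (ℓ + 1) → ℕ),
      nest (List.ofFn fun i => (x i, a i, m i)) = 0)
    (p : LTSeries (PrimeSpectrum R)) : p.length ≤ ℓ := by
  by_contra hlen
  push_neg at hlen
  set P : ℕ → Ideal R := fun i =>
    (p ⟨min i p.length, Nat.lt_succ_of_le (min_le_right _ _)⟩).asIdeal with hP
  have hmono : ∀ i, P i ≤ P (i + 1) := fun i =>
    p.strictMono.monotone (by simp only [Fin.mk_le_mk]; omega)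
  have hlt : ∀ i : Fin (ℓ + 1), P i < P ((i : ℕ) + 1) := by
    intro i
    simp only [hP]
    rw [PrimeSpectrum.asIdeal_lt_asIdeal]
    apply p.strictMono
    simp only [Fin.mk_lt_mk]; omega
  have hex : ∀ i : Fin (ℓ + 1), ∃ y, y ∈ P ((i : ℕ) + 1) ∧ y ∉ P i := fun i =>
    SetLike.exists_of_lt (hlt i)
  choose x hx1 hx0 using hex
  obtain ⟨a, m, hnest⟩ := h x
  have := nest_notMem P hmono (fun i => (p _).2) (List.ofFn fun i => (x i, a i, m i))
    (by
      intro i hi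
      simp only [List.length_ofFn] at hi
      simp only [List.getElem_ofFn]
      exact ⟨hx1 ⟨i, hi⟩, hx0 ⟨i, hi⟩⟩)
  rw [hnest] at this
  exact this (P 0).zero_mem

lemma nest_ofFn (L : ℕ) (x a : Fin L → R) (m : Fin L → ℕ) :
    nest (List.ofFn fun i => (x i, a i, m i)) =
      (∏ i, x i ^ m i) +
        ∑ t, (∏ i, x i ^ (if i < t then m i else 0)) * (x t ^ (m t + 1) * a t) := by
  induction L with
  | zero => simp [nest]
  | succ L ih =>
    rw [List.ofFn_succ]
    show x 0 ^ m 0 * (nest _ + a 0 * x 0) = _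
    rw [ih (fun i => x i.succ) (fun i => a i.succ) (fun i => m i.succ)]
    rw [Fin.prod_univ_succ fun i => x i ^ m i]
    rw [Fin.sum_univ_succ fun t =>
      (∏ i, x i ^ (if i < t then m i else 0)) * (x t ^ (m t + 1) * a t)]
    have h0 : (∏ i, x i ^ (if i < (0 : Fin (L + 1)) then m i else 0)) = 1 := by
      apply Finset.prod_eq_one
      intro i _
      simp [Fin.not_lt_zero]
    have hsucc : ∀ t : Fin L,
        (∏ i, x i ^ (if i < t.succ then m i else 0)) =
          x 0 ^ m 0 * ∏ i, x i.succ ^ (if i < t then m i.succ else 0) := by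
      intro t
      rw [Fin.prod_univ_succ fun i => x i ^ (if i < t.succ then m i else 0)]
      congr 1
      · simp [Fin.succ_pos]
    rw [h0]
    simp only [hsucc]
    rw [mul_add, mul_add, Finset.mul_sum]
    ring_nf

/-- Factorization of a monomial along the first lex difference. -/
lemma xpow_factor {L : ℕ} (x : Fin L → R) (α β : Fin L →₀ ℕ) (j : Fin L)
    (hpref : ∀ i, i < j → α i = β i) (hjlt : α j < β j) :
    (∏ i, x i ^ (β i : ℕ)) =
      (∏ i, x i ^ (if i < j then (α i : ℕ) else 0)) *
        (x j ^ ((α j : ℕ) + 1) *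
          ∏ i, x i ^ (if i < j then 0 else if i = j then (β j : ℕ) - ((α j : ℕ) + 1)
            else (β i : ℕ))) := by
  have hxj : x j ^ ((α j : ℕ) + 1) = ∏ i, x i ^ (if i = j then (α j : ℕ) + 1 else 0) := by
    rw [Finset.prod_congr rfl (fun i _ => ?_), Finset.prod_ite_eq' Finset.univ j
      (fun i => x i ^ ((α j : ℕ) + 1))]
    · simp
    · rw [apply_ite (x i ^ ·), pow_zero]
  rw [hxj, ← Finset.prod_mul_distrib, ← Finset.prod_mul_distrib]
  apply Finset.prod_congr rfl
  intro i _
  rw [← pow_add, ← pow_add]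
  congr 1
  rcases lt_trichotomy i j with h | h | h
  · rw [if_pos h, if_neg (ne_of_lt h), if_pos h, hpref i h]
    omega
  · subst h
    rw [if_neg (lt_irrefl i), if_pos rfl, if_neg (lt_irrefl i), if_pos rfl]
    omega
  · rw [if_neg (not_lt_of_gt h), if_neg (ne_of_gt h), if_neg (not_lt_of_gt h),
      if_neg (ne_of_gt h)]
    omega

end AuxCL

section AuxPoly

lemma exists_annihilating (x : Fin (Fintype.card V + 1) → MvPolynomial V K) :
    ∃ Q : MvPolynomial (Fin (Fintype.card V + 1)) K, Q ≠ 0 ∧ aeval x Q = 0 := by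
  classical
  set d : ℕ := 1 + Finset.univ.sup (fun i => (x i).totalDegree) with hd
  have hxd : ∀ i, (x i).totalDegree ≤ d :=
    fun i => le_trans (Finset.le_sup (f := fun i => (x i).totalDegree) (Finset.mem_univ i)) (by omega)
  set c : ℕ := ((Fintype.card V) + 1) * d + 1 with hc
  set s : ℕ := c ^ (Fintype.card V) with hs
  have hs1 : 1 ≤ s := Nat.one_le_iff_ne_zero.mpr (pow_ne_zero _ (by omega))
  set D : ℕ := ((Fintype.card V) + 1) * s * d with hD
  set E : Finset (V →₀ ℕ) :=
    (Finset.univ : Finset (V → Fin (D + 1))).image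
      (fun g => Finsupp.equivFunOnFinite.symm fun v => (g v : ℕ)) with hE
  set MB : Finset (MvPolynomial V K) := E.image (fun e => monomial e (1 : K)) with hMB
  have hMBcard : MB.card ≤ (D + 1) ^ (Fintype.card V) := by
    calc MB.card ≤ E.card := Finset.card_image_le
    _ ≤ (Finset.univ : Finset (V → Fin (D + 1))).card := Finset.card_image_le
    _ = (D + 1) ^ (Fintype.card V) := by simp [Fintype.card_fun]
  have hspan : ∀ p : MvPolynomial V K, p.totalDegree ≤ D →
      p ∈ Submodule.span K (MB : Set (MvPolynomial V K)) := by
    intro p hp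
    rw [p.as_sum]
    apply Submodule.sum_mem
    intro e he
    have heD : ∀ v, e v ≤ D := by
      intro v
      have h1 : e v ≤ e.sum fun _ n => n := by
        by_cases hv : v ∈ e.support
        · exact Finset.single_le_sum (fun _ _ => Nat.zero_le _) hv
        · simp [Finsupp.notMem_support_iff.mp hv]
      exact le_trans h1 (le_trans (MvPolynomial.le_totalDegree he) hp)
    have heE : e ∈ E := by
      rw [hE, Finset.mem_image]
      refine ⟨fun v => ⟨e v, Nat.lt_succ_of_le (heD v)⟩, Finset.mem_univ _, ?_⟩
      ext v; simp
    have hmono : monomial e (coeff e p) = coeff e p • monomial e (1 : K) := by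
      rw [smul_monomial, smul_eq_mul, mul_one]
    rw [hmono]
    exact Submodule.smul_mem _ _
      (Submodule.subset_span (Finset.mem_coe.mpr (Finset.mem_image_of_mem _ heE)))
  have hcard : Fintype.card (Fin ((Fintype.card V) + 1) → Fin (s + 1)) = (s + 1) ^ ((Fintype.card V) + 1) := by
    simp [Fintype.card_fun]
  set b : (Fin ((Fintype.card V) + 1) → Fin (s + 1)) → MvPolynomial V K :=
    fun β => ∏ i, x i ^ (β i : ℕ) with hb
  have hbmem : ∀ β, b β ∈ Submodule.span K (MB : Set (MvPolynomial V K)) := by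
    intro β
    apply hspan
    calc (∏ i, x i ^ (β i : ℕ)).totalDegree ≤ ∑ i, (x i ^ (β i : ℕ)).totalDegree :=
      MvPolynomial.totalDegree_finset_prod _ _
    _ ≤ ∑ _i : Fin ((Fintype.card V) + 1), s * d := by
        apply Finset.sum_le_sum; intro i _
        exact le_trans (MvPolynomial.totalDegree_pow _ _)
          (Nat.mul_le_mul (Nat.lt_succ_iff.mp (β i).2) (hxd i))
    _ = ((Fintype.card V) + 1) * (s * d) := by simp [Finset.sum_const, Finset.card_univ, mul_comm]
    _ = D := by rw [hD]; ring
  have hnotli : ¬ LinearIndependent K b := by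
    intro hli
    have h1 := linearIndependent_iff_card_le_finrank_span.mp hli
    have h2 : Submodule.span K (Set.range b) ≤ Submodule.span K (MB : Set (MvPolynomial V K)) := by
      rw [Submodule.span_le]; rintro _ ⟨β, rfl⟩; exact hbmem β
    have h3 : (Set.range b).finrank K ≤ MB.card :=
      le_trans (Submodule.finrank_mono h2) (finrank_span_finset_le_card MB)
    have h4 : (s + 1) ^ ((Fintype.card V) + 1) ≤ (D + 1) ^ (Fintype.card V) := by
      calc (s + 1) ^ ((Fintype.card V) + 1)
          = Fintype.card (Fin ((Fintype.card V) + 1) → Fin (s + 1)) := hcard.symm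
      _ ≤ (Set.range b).finrank K := h1
      _ ≤ (D + 1) ^ (Fintype.card V) := le_trans h3 hMBcard
    have h5 : (D + 1) ^ (Fintype.card V) ≤ s ^ ((Fintype.card V) + 1) := by
      have hDc : D + 1 ≤ s * c := by rw [hD, hc]; nlinarith [hs1]
      calc (D + 1) ^ (Fintype.card V) ≤ (s * c) ^ (Fintype.card V) := Nat.pow_le_pow_left hDc _
      _ = s ^ (Fintype.card V) * c ^ (Fintype.card V) := mul_pow s c _
      _ = s ^ (Fintype.card V) * s := by rw [hs]
      _ = s ^ ((Fintype.card V) + 1) := by rw [pow_succ]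
    have h6 : s ^ ((Fintype.card V) + 1) < (s + 1) ^ ((Fintype.card V) + 1) :=
      Nat.pow_lt_pow_left (Nat.lt_succ_self s) (Nat.succ_ne_zero _)
    omega
  obtain ⟨g, hgsum, β₀, hg0⟩ := Fintype.not_linearIndependent_iff.mp hnotli
  set toExp : (Fin ((Fintype.card V) + 1) → Fin (s + 1)) → (Fin ((Fintype.card V) + 1) →₀ ℕ) :=
    fun β => Finsupp.equivFunOnFinite.symm (fun i => (β i : ℕ)) with htoExp
  have hinj : Function.Injective toExp := by
    intro β1 β2 h
    funext i
    have h2 := congrArg (fun e : Fin ((Fintype.card V) + 1) →₀ ℕ => e i) h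
    simp only [htoExp, Finsupp.coe_equivFunOnFinite_symm] at h2
    exact Fin.val_injective h2
  have hco : ∀ β₁, coeff (toExp β₁) (∑ β, monomial (toExp β) (g β)) = g β₁ := by
    intro β₁
    rw [coeff_sum]
    rw [Finset.sum_eq_single β₁]
    · simp [coeff_monomial]
    · intro β _ hβ
      rw [coeff_monomial, if_neg (fun h => hβ (hinj h))]
    · intro h; exact absurd (Finset.mem_univ _) h
  refine ⟨∑ β, monomial (toExp β) (g β), ?_, ?_⟩
  · intro hQ
    apply hg0
    rw [← hco β₀, hQ, coeff_zero]
  · rw [map_sum]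
    have haev : ∀ β, aeval x (monomial (toExp β) (g β)) = g β • b β := by
      intro β
      rw [aeval_monomial, Finsupp.prod_fintype _ _ (fun i => pow_zero _), Algebra.smul_def]
      simp [htoExp, hb]
    simp only [haev]
    exact hgsum

lemma nest_zero_of_annihilating {L : ℕ} (hL : 0 < L) (x : Fin L → MvPolynomial V K)
    (Q : MvPolynomial (Fin L) K) (hQ0 : Q ≠ 0) (hQev : aeval x Q = 0) :
    ∃ (a : Fin L → MvPolynomial V K) (m : Fin L → ℕ),
      nest (List.ofFn fun i => (x i, a i, m i)) = 0 := by
  classical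
  have hTne : Q.support.Nonempty := by
    rw [Finset.nonempty_iff_ne_empty, Ne, MvPolynomial.support_eq_empty]
    exact hQ0
  obtain ⟨α, hαT, hαmin⟩ := Q.support.exists_min_image (fun β => toLex β) hTne
  have hc0 : coeff α Q ≠ 0 := mem_support_iff.mp hαT
  have hlt : ∀ β ∈ Q.support, β ≠ α → toLex α < toLex β := fun β hβ hne =>
    lt_of_le_of_ne (hαmin β hβ) (fun h => hne (toLex.injective h).symm)
  set J : (Fin L →₀ ℕ) → Fin L := fun β =>
    if h : toLex α < toLex β then (Finsupp.Lex.lt_iff.mp h).choose else ⟨0, hL⟩ with hJ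
  have hJspec : ∀ β, toLex α < toLex β →
      (∀ i, i < J β → α i = β i) ∧ α (J β) < β (J β) := by
    intro β h
    have hspec := (Finsupp.Lex.lt_iff.mp h).choose_spec
    rw [hJ]
    simp only [dif_pos h]
    exact ⟨fun i hi => hspec.1 i hi, hspec.2⟩
  set r : Fin L → MvPolynomial V K := fun j =>
    ∑ β ∈ (Q.support.erase α).filter (fun β => J β = j),
      C (coeff β Q) * ∏ i, x i ^ (if i < j then 0 else if i = j then (β j : ℕ) - ((α j : ℕ) + 1)
        else (β i : ℕ)) with hr
  have hev0 : aeval x Q = ∑ β ∈ Q.support, C (coeff β Q) * ∏ i, x i ^ (β i : ℕ) := by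
    conv_lhs => rw [Q.as_sum]
    rw [map_sum]
    apply Finset.sum_congr rfl
    intro β _
    rw [aeval_monomial, Finsupp.prod_fintype _ _ (fun i => pow_zero _), algebraMap_eq]
  have hev : (0 : MvPolynomial V K) =
      C (coeff α Q) * (∏ i, x i ^ (α i : ℕ)) +
        ∑ β ∈ Q.support.erase α, C (coeff β Q) * ∏ i, x i ^ (β i : ℕ) := by
    have hsplit : C (coeff α Q) * (∏ i, x i ^ (α i : ℕ)) +
        ∑ β ∈ Q.support.erase α, C (coeff β Q) * ∏ i, x i ^ (β i : ℕ) =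
        ∑ β ∈ Q.support, C (coeff β Q) * ∏ i, x i ^ (β i : ℕ) := by
      conv_rhs => rw [← Finset.insert_erase hαT]
      rw [Finset.sum_insert (Finset.notMem_erase _ _)]
    rw [hsplit, ← hev0, hQev]
  have hfib : ∑ β ∈ Q.support.erase α, C (coeff β Q) * ∏ i, x i ^ (β i : ℕ) =
      ∑ j, (∏ i, x i ^ (if i < j then (α i : ℕ) else 0)) *
        (x j ^ ((α j : ℕ) + 1) * r j) := by
    rw [← Finset.sum_fiberwise (Q.support.erase α) J
      (fun β => C (coeff β Q) * ∏ i, x i ^ (β i : ℕ))]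
    apply Finset.sum_congr rfl
    intro j _
    rw [hr]
    rw [Finset.mul_sum, Finset.mul_sum]
    apply Finset.sum_congr rfl
    intro β hβ
    rw [Finset.mem_filter] at hβ
    obtain ⟨hβe, hβj⟩ := hβ
    have hβs := Finset.mem_of_mem_erase hβe
    have hβne := Finset.ne_of_mem_erase hβe
    obtain ⟨hpref, hjlt⟩ := hJspec β (hlt β hβs hβne)
    rw [hβj] at hpref hjlt
    rw [xpow_factor x α β j hpref hjlt]
    ring
  refine ⟨fun j => C (coeff α Q)⁻¹ * r j, fun i => α i, ?_⟩
  rw [nest_ofFn]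
  have hsum : ∑ t, (∏ i, x i ^ (if i < t then (α i : ℕ) else 0)) *
      (x t ^ ((α t : ℕ) + 1) * (C (coeff α Q)⁻¹ * r t)) =
      C (coeff α Q)⁻¹ * ∑ t, (∏ i, x i ^ (if i < t then (α i : ℕ) else 0)) *
        (x t ^ ((α t : ℕ) + 1) * r t) := by
    rw [Finset.mul_sum]
    apply Finset.sum_congr rfl
    intro t _
    ring
  rw [hsum, ← hfib]
  have h2 : ∑ β ∈ Q.support.erase α, C (coeff β Q) * ∏ i, x i ^ (β i : ℕ) =
      -(C (coeff α Q) * ∏ i, x i ^ (α i : ℕ)) :=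
    eq_neg_of_add_eq_zero_right hev.symm
  rw [h2, mul_neg, ← mul_assoc, ← C_mul, inv_mul_cancel₀ hc0, C_1, one_mul]
  exact add_neg_cancel _

/-- Every chain of primes in the polynomial ring has length at most the number
of variables (Coquand–Lombardi). -/
lemma ltSeries_length_le_card (p : LTSeries (PrimeSpectrum (MvPolynomial V K))) :
    p.length ≤ Fintype.card V := by
  apply length_le_of_nest
  intro x
  obtain ⟨Q, hQ0, hQev⟩ := exists_annihilating K x
  exact nest_zero_of_annihilating K (Nat.succ_pos _) x Q hQ0 hQev

end AuxPoly

section AuxVar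

/-- The prime ideal generated by the variables in `T`. -/
def varIdeal (T : Set V) : Ideal (MvPolynomial V K) :=
  Ideal.span ((fun v => (X v : MvPolynomial V K)) '' T)

lemma mem_varIdeal_iff {T : Set V} {p : MvPolynomial V K} :
    p ∈ varIdeal K T ↔ ∀ d ∈ p.support, ∃ v ∈ T, d v ≠ 0 := by
  have himg : (fun v => (X v : MvPolynomial V K)) '' T =
      (fun e => monomial e (1 : K)) '' ((fun v => Finsupp.single v 1) '' T) := by
    rw [Set.image_image]
    apply Set.image_congr
    intro v _
    rw [X]
  rw [varIdeal, himg, mem_ideal_span_monomial_image]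
  apply forall₂_congr
  intro d _
  constructor
  · rintro ⟨e, ⟨v, hv, rfl⟩, he⟩
    exact ⟨v, hv, by
      have := Finsupp.single_le_iff.mp he
      omega⟩
  · rintro ⟨v, hv, hd⟩
    exact ⟨Finsupp.single v 1, ⟨v, hv, rfl⟩, Finsupp.single_le_iff.mpr (by omega)⟩

lemma X_mem_varIdeal_iff {T : Set V} {w : V} :
    (X w : MvPolynomial V K) ∈ varIdeal K T ↔ w ∈ T := by
  rw [mem_varIdeal_iff]
  constructor
  · intro h
    obtain ⟨v, hv, hne⟩ := h (Finsupp.single w 1) (by rw [support_X]; simp)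
    have hvw : v = w := by
      by_contra hvw
      exact hne (Finsupp.single_eq_of_ne hvw)
    subst hvw; exact hv
  · intro hw d hd
    rw [support_X] at hd
    simp only [Finset.mem_singleton] at hd
    subst hd
    exact ⟨w, hw, by simp⟩

lemma varIdeal_mono {T T' : Set V} (h : T ⊆ T') : varIdeal K T ≤ varIdeal K T' :=
  Ideal.span_mono (Set.image_mono h)

/-- The variable-killing endomorphism. -/
lemma varIdeal_isPrime (T : Set V) : (varIdeal K T).IsPrime := by
  classical
  set ψ : MvPolynomial V K →ₐ[K] MvPolynomial V K :=
    aeval (fun v => if v ∈ T then 0 else X v) with hψ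
  have hker : ∀ p : MvPolynomial V K, p ∈ varIdeal K T ↔ ψ p = 0 := by
    intro p
    constructor
    · intro hp
      have hle : varIdeal K T ≤ RingHom.ker (ψ : MvPolynomial V K →+* MvPolynomial V K) := by
        rw [varIdeal, Ideal.span_le]
        rintro _ ⟨v, hv, rfl⟩
        simp [RingHom.mem_ker, hψ, hv]
      exact hle hp
    · intro hp
      rw [mem_varIdeal_iff]
      by_contra hcon
      push_neg at hcon
      obtain ⟨d, hd, hdT⟩ := hcon
      -- coefficient of d in ψ p is coeff d p ≠ 0
      have hmono : ∀ e : V →₀ ℕ, ψ (monomial e (coeff e p)) =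
          if (∀ v ∈ T, e v = 0) then monomial e (coeff e p) else 0 := by
        intro e
        rw [hψ, aeval_monomial]
        split_ifs with he
        · rw [monomial_eq]
          congr 1
          apply Finsupp.prod_congr
          intro v hv
          rw [if_neg]
          intro hvT
          exact absurd (he v hvT) (Finsupp.mem_support_iff.mp hv)
        · push_neg at he
          obtain ⟨v, hvT, hv⟩ := he
          rw [Finsupp.prod]
          rw [Finset.prod_eq_zero (Finsupp.mem_support_iff.mpr hv)]
          · rw [mul_zero]
          · rw [if_pos hvT, zero_pow hv]
      have hcoeff : coeff d (ψ p) = coeff d p := by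
        conv_lhs => rw [p.as_sum, map_sum]
        rw [coeff_sum]
        rw [Finset.sum_eq_single d]
        · rw [hmono d, if_pos (fun v hv => hdT v hv), coeff_monomial, if_pos rfl]
        · intro e he hne
          rw [hmono e]
          split_ifs with h1
          · rw [coeff_monomial, if_neg hne]
          · exact coeff_zero _
        · intro hdd
          exact absurd hd hdd
      rw [hp, coeff_zero] at hcoeff
      exact (mem_support_iff.mp hd) hcoeff.symm
  constructor
  · intro htop
    have h1 : (1 : MvPolynomial V K) ∈ varIdeal K T := htop ▸ Submodule.mem_top
    rw [hker, map_one] at h1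
    exact one_ne_zero h1
  · intro a b hab
    rw [hker, map_mul] at hab
    rcases mul_eq_zero.mp hab with h | h
    · exact Or.inl ((hker a).mpr h)
    · exact Or.inr ((hker b).mpr h)


end AuxVar

section AuxGraph

lemma prod_monomial_one {ι : Type*} (s : Finset ι) (e : ι → (V →₀ ℕ)) :
    (∏ i ∈ s, monomial (e i) (1 : K)) = monomial (∑ i ∈ s, e i) (1 : K) := by
  classical
  induction s using Finset.induction with
  | empty => simp [monomial_zero']
  | @insert a s h ih => rw [Finset.prod_insert h, Finset.sum_insert h, ih, monomial_mul, one_mul]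

lemma matchProd_eq_monomial {k : ℕ} (f : Fin k → V × V) :
    (∏ i, (X (f i).1 * X (f i).2 : MvPolynomial V K)) =
      monomial (∑ i, (Finsupp.single (f i).1 1 + Finsupp.single (f i).2 1)) 1 := by
  rw [← prod_monomial_one]
  apply Finset.prod_congr rfl
  intro i _
  rw [X, X, monomial_mul, one_mul]

lemma matchExp_pos {k : ℕ} (f : Fin k → V × V) (v : V) (i : Fin k)
    (hv : v = (f i).1 ∨ v = (f i).2) :
    ((∑ j, (Finsupp.single (f j).1 1 + Finsupp.single (f j).2 1) : V →₀ ℕ)) v ≠ 0 := by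
  classical
  rw [Finset.sum_apply']
  have h1 : 0 < ((Finsupp.single (f i).1 1 + Finsupp.single (f i).2 1 : V →₀ ℕ)) v := by
    rw [Finsupp.add_apply]
    rcases hv with h | h
    · rw [h, Finsupp.single_eq_same]; omega
    · rw [h, Finsupp.single_eq_same]; omega
  have h2 := Finset.single_le_sum
    (f := fun j => ((Finsupp.single (f j).1 1 + Finsupp.single (f j).2 1 : V →₀ ℕ)) v)
    (fun _ _ => Nat.zero_le _) (Finset.mem_univ i)
  have h3 : 0 < ∑ j, ((Finsupp.single (f j).1 1 + Finsupp.single (f j).2 1 : V →₀ ℕ)) v :=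
    lt_of_lt_of_le h1 h2
  exact Nat.pos_iff_ne_zero.mp h3

lemma endpoints_card {G : SimpleGraph V} {k : ℕ} (f : Fin k → V × V)
    (hf : IsMatchingOn G f) :
    (Finset.univ.biUnion fun i => ({(f i).1, (f i).2} : Finset V)).card = 2 * k := by
  classical
  rw [Finset.card_biUnion]
  · rw [Finset.sum_congr rfl (fun i _ => Finset.card_pair (hf.1 i).ne)]
    simp [mul_comm]
  · intro i _ j _ hij
    rw [Function.onFun, Finset.disjoint_left]
    intro a hai haj
    have hmem : a ∈ ({(f i).1, (f i).2} : Set V) ∩ {(f j).1, (f j).2} :=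
      ⟨by simpa using hai, by simpa using haj⟩
    rw [hf.2 hij] at hmem
    exact hmem

lemma matchPow_le_varIdeal {G : SimpleGraph V} {k : ℕ} (T : Set V)
    (hT : ∀ s : Finset V, s.card = 2 * k → ∃ v ∈ s, v ∈ T) :
    matchPow K V G k ≤ varIdeal K T := by
  classical
  rw [matchPow, Ideal.span_le]
  rintro p ⟨g, hg, rfl⟩
  rw [SetLike.mem_coe, mem_varIdeal_iff]
  intro dd hdd
  rw [matchProd_eq_monomial, support_monomial, if_neg (one_ne_zero)] at hdd
  simp only [Finset.mem_singleton] at hdd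
  subst hdd
  obtain ⟨v, hvmem, hvT⟩ := hT (Finset.univ.biUnion fun i => ({(g i).1, (g i).2} : Finset V))
    (endpoints_card g hg)
  refine ⟨v, hvT, ?_⟩
  rw [Finset.mem_biUnion] at hvmem
  obtain ⟨i, _, hvi⟩ := hvmem
  simp only [Finset.mem_insert, Finset.mem_singleton] at hvi
  exact matchExp_pos g v i hvi

lemma varIdeal_chain_lt {m : ℕ} (w : Fin m → V) (hw : Function.Injective w)
    {j j' : ℕ} (hjj : j < j') (hj'm : j' ≤ m) :
    varIdeal K (w '' {i : Fin m | (i : ℕ) < j}) < varIdeal K (w '' {i : Fin m | (i : ℕ) < j'}) := by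
  refine lt_of_le_of_ne ?_ ?_
  · exact varIdeal_mono K (Set.image_mono (fun i hi => lt_trans hi hjj))
  · intro heq
    have hjm : j < m := lt_of_lt_of_le hjj hj'm
    have h1 : (X (w ⟨j, hjm⟩) : MvPolynomial V K) ∈ varIdeal K (w '' {i : Fin m | (i : ℕ) < j'}) :=
      (X_mem_varIdeal_iff K).mpr ⟨⟨j, hjm⟩, hjj, rfl⟩
    rw [← heq, X_mem_varIdeal_iff K] at h1
    obtain ⟨i, hi, hwi⟩ := h1
    have hieq : i = ⟨j, hjm⟩ := hw hwi
    subst hieq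
    have hji : ((⟨j, hjm⟩ : Fin m) : ℕ) < j := hi
    simp only [] at hji
    omega

lemma exists_vars_of_prime {G : SimpleGraph V} {n k : ℕ} (hkn : k ≤ n) (f : Fin n → V × V)
    (hf : IsMatchingOn G f)
    (P : Ideal (MvPolynomial V K)) (hP : P.IsPrime) (hle : matchPow K V G k ≤ P) :
    ∃ w : Fin (n - k + 1) → V, Function.Injective w ∧
      ∀ i, (X (w i) : MvPolynomial V K) ∈ P := by
  classical
  haveI := hP
  set J : Finset (Fin n) := Finset.univ.filter
    (fun i => (X (f i).1 : MvPolynomial V K) ∈ P ∨ (X (f i).2 : MvPolynomial V K) ∈ P) with hJdef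
  have hJcard : n - k + 1 ≤ J.card := by
    by_contra hcon
    push_neg at hcon
    have hc1 : k ≤ Jᶜ.card := by
      rw [Finset.card_compl]
      simp only [Fintype.card_fin]
      omega
    obtain ⟨s, hsub, hscard⟩ := Finset.exists_subset_card_eq hc1
    set e : Fin k → Fin n := fun i => ((s.orderIsoOfFin hscard i : s) : Fin n) with he
    have heinj : Function.Injective e := fun i j hij =>
      (s.orderIsoOfFin hscard).injective (Subtype.ext hij)
    have hemem : ∀ i, e i ∈ Jᶜ := fun i => hsub (s.orderIsoOfFin hscard i).2
    have hmatch : IsMatchingOn G (f ∘ e) :=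
      ⟨fun i => hf.1 (e i), fun i j hij => hf.2 (fun h => hij (heinj h))⟩
    have hp : (∏ i, (X ((f ∘ e) i).1 * X ((f ∘ e) i).2 : MvPolynomial V K)) ∈ P := by
      apply hle
      rw [matchPow]
      exact Ideal.subset_span ⟨f ∘ e, hmatch, rfl⟩
    obtain ⟨i, _, hi⟩ := Ideal.IsPrime.prod_mem_iff.mp hp
    have hiJ : e i ∈ Jᶜ := hemem i
    rw [Finset.mem_compl, hJdef, Finset.mem_filter] at hiJ
    push_neg at hiJ
    have hiJ2 := hiJ (Finset.mem_univ _)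
    rcases hP.mem_or_mem hi with h | h
    · exact hiJ2.1 h
    · exact hiJ2.2 h
  obtain ⟨J', hJ'sub, hJ'card⟩ := Finset.exists_subset_card_eq hJcard
  set vtx : Fin n → V := fun i =>
    if (X (f i).1 : MvPolynomial V K) ∈ P then (f i).1 else (f i).2 with hvtx
  have hvtxP : ∀ i ∈ J, (X (vtx i) : MvPolynomial V K) ∈ P := by
    intro i hi
    rw [hJdef, Finset.mem_filter] at hi
    by_cases hcase : (X (f i).1 : MvPolynomial V K) ∈ P
    · simp only [hvtx, if_pos hcase]
      exact hcase
    · simp only [hvtx, if_neg hcase]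
      rcases hi.2 with h1 | h2
      · exact absurd h1 hcase
      · exact h2
  have hvtxmem : ∀ i, vtx i = (f i).1 ∨ vtx i = (f i).2 := by
    intro i
    by_cases hcase : (X (f i).1 : MvPolynomial V K) ∈ P
    · exact Or.inl (by simp only [hvtx, if_pos hcase])
    · exact Or.inr (by simp only [hvtx, if_neg hcase])
  have hvtxinj : Function.Injective vtx := by
    intro i j hij
    by_contra hne
    have hdisj := hf.2 hne
    have h1 : vtx i ∈ ({(f i).1, (f i).2} : Set V) := by
      rcases hvtxmem i with h | h <;> rw [h] <;> simp
    have h2 : vtx i ∈ ({(f j).1, (f j).2} : Set V) := by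
      rw [hij]
      rcases hvtxmem j with h | h <;> rw [h] <;> simp
    have h3 : vtx i ∈ (∅ : Set V) := hdisj ▸ Set.mem_inter h1 h2
    exact h3
  refine ⟨fun i => vtx ((J'.orderIsoOfFin hJ'card i : J') : Fin n), ?_, ?_⟩
  · intro i j hij
    exact (J'.orderIsoOfFin hJ'card).injective (Subtype.ext (hvtxinj hij))
  · intro i
    exact hvtxP _ (hJ'sub (J'.orderIsoOfFin hJ'card i).2)

/-- Upper bound for chains of primes over the matching power ideal. -/
lemma upper_len {G : SimpleGraph V} {n k : ℕ} (hcard : Fintype.card V = 2 * n)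
    (hk1 : 1 ≤ k) (hkn : k ≤ n) (f : Fin n → V × V) (hf : IsMatchingOn G f)
    (q : LTSeries (PrimeSpectrum (MvPolynomial V K ⧸ matchPow K V G k))) :
    q.length ≤ n + k - 1 := by
  classical
  have hsurj : Function.Surjective (Ideal.Quotient.mk (matchPow K V G k)) := Ideal.Quotient.mk_surjective
  set F : PrimeSpectrum (MvPolynomial V K ⧸ (matchPow K V G k)) → PrimeSpectrum (MvPolynomial V K) :=
    fun pp => ⟨Ideal.comap (Ideal.Quotient.mk (matchPow K V G k)) pp.asIdeal, pp.2.comap _⟩ with hF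
  have hFmono : StrictMono F := by
    intro pp qq hpq
    rw [← PrimeSpectrum.asIdeal_lt_asIdeal] at hpq ⊢
    refine lt_of_le_of_ne (Ideal.comap_mono hpq.le) (fun h => hpq.ne ?_)
    exact Ideal.comap_injective_of_surjective _ hsurj h
  set q' := q.map F hFmono with hq'
  set P0 := (q'.head).asIdeal with hP0
  have hP0prime : P0.IsPrime := (q'.head).2
  have hP0I : (matchPow K V G k) ≤ P0 := by
    rw [hP0, hq']
    calc (matchPow K V G k) = RingHom.ker (Ideal.Quotient.mk (matchPow K V G k)) := Ideal.mk_ker.symm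
    _ ≤ Ideal.comap (Ideal.Quotient.mk (matchPow K V G k)) (q.head.asIdeal) := Ideal.ker_le_comap _
  obtain ⟨w, hwinj, hwP⟩ := exists_vars_of_prime K hkn f hf P0 hP0prime hP0I
  have hm1 : n - k + 1 - 1 + 1 = n - k + 1 := by omega
  set A : LTSeries (PrimeSpectrum (MvPolynomial V K)) :=
    { length := n - k + 1 - 1
      toFun := fun j =>
        ⟨varIdeal K (w '' {i : Fin (n - k + 1) | (i : ℕ) < (j : ℕ)}), varIdeal_isPrime K _⟩
      step := fun j => by
        show (_ : PrimeSpectrum (MvPolynomial V K)) < _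
        rw [← PrimeSpectrum.asIdeal_lt_asIdeal]
        have hj : ((j.succ : Fin (n - k + 1 - 1 + 1)) : ℕ) ≤ n - k + 1 := by
          have := j.2
          simp only [Fin.val_succ]
          omega
        exact varIdeal_chain_lt K w hwinj (by simp [Fin.lt_def]) hj } with hA
  have hconnect : A.last < q'.head := by
    rw [← PrimeSpectrum.asIdeal_lt_asIdeal]
    have hlast : A.last.asIdeal =
        varIdeal K (w '' {i : Fin (n - k + 1) | (i : ℕ) < n - k + 1 - 1}) := by
      rw [hA]
      rfl
    rw [hlast]
    calc varIdeal K (w '' {i : Fin (n - k + 1) | (i : ℕ) < n - k + 1 - 1})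
        < varIdeal K (w '' {i : Fin (n - k + 1) | (i : ℕ) < n - k + 1}) :=
          varIdeal_chain_lt K w hwinj (by omega) (le_refl _)
    _ ≤ P0 := by
        rw [varIdeal, Ideal.span_le]
        rintro _ ⟨_, ⟨i, _, rfl⟩, rfl⟩
        exact hwP i
  have hlen2 : (n - k + 1 - 1) + q.length + 1 ≤ Fintype.card V := by
    have heq : (A.append q' hconnect).length = (n - k + 1 - 1) + q.length + 1 := rfl
    rw [← heq]
    exact ltSeries_length_le_card K _
  rw [hcard] at hlen2
  omega

/-- Lower bound: a chain of primes of length 2k-1 over the matching power ideal. -/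
lemma lower_series {G : SimpleGraph V} {n k : ℕ} (hcard : Fintype.card V = 2 * n)
    (hk1 : 1 ≤ k) (hkn : k ≤ n) :
    ∃ q : LTSeries (PrimeSpectrum (MvPolynomial V K ⧸ matchPow K V G k)),
      q.length = 2 * k - 1 := by
  classical
  set I := matchPow K V G k with hI
  have hsurj : Function.Surjective (Ideal.Quotient.mk I) := Ideal.Quotient.mk_surjective
  have hembn : 2 * k - 1 ≤ Fintype.card V := by omega
  obtain ⟨w⟩ : Nonempty (Fin (2 * k - 1) ↪ V) := by
    rw [Function.Embedding.nonempty_iff_card_le, Fintype.card_fin]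
    exact hembn
  -- the base set : complement of the range of w
  set B : Set V := {v | v ∉ Set.range w} with hB
  set T : ℕ → Set V := fun j => B ∪ (w '' {i : Fin (2 * k - 1) | (i : ℕ) < j}) with hT
  have hTle : ∀ j, I ≤ varIdeal K (T j) := by
    intro j
    apply matchPow_le_varIdeal
    intro s hs
    by_contra hcon
    push_neg at hcon
    have hsub : s ⊆ Finset.univ.image w := by
      intro v hv
      have := hcon v hv
      rw [hT] at this
      simp only [Set.mem_union, hB, Set.mem_setOf_eq] at this
      push_neg at this
      obtain ⟨i, hi⟩ := this.1
      rw [Finset.mem_image]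
      exact ⟨i, Finset.mem_univ _, hi⟩
    have hcard2 := Finset.card_le_card hsub
    have : (Finset.univ.image w).card ≤ 2 * k - 1 := by
      calc (Finset.univ.image w).card ≤ (Finset.univ : Finset (Fin (2 * k - 1))).card :=
        Finset.card_image_le
      _ = 2 * k - 1 := by simp
    omega
  have hTlt : ∀ j j' : ℕ, j < j' → j' ≤ 2 * k - 1 → varIdeal K (T j) < varIdeal K (T j') := by
    intro j j' hjj hj'm
    refine lt_of_le_of_ne ?_ ?_
    · apply varIdeal_mono
      rw [hT]
      apply Set.union_subset_union_right
      exact Set.image_mono (fun i hi => lt_trans hi hjj)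
    · intro heq
      have hjm : j < 2 * k - 1 := lt_of_lt_of_le hjj hj'm
      have h1 : (X (w ⟨j, hjm⟩) : MvPolynomial V K) ∈ varIdeal K (T j') :=
        (X_mem_varIdeal_iff K).mpr (Or.inr ⟨⟨j, hjm⟩, hjj, rfl⟩)
      rw [← heq, X_mem_varIdeal_iff K] at h1
      rcases h1 with h1 | h1
      · exact h1 ⟨⟨j, hjm⟩, rfl⟩
      · obtain ⟨i, hi, hwi⟩ := h1
        have hieq : i = ⟨j, hjm⟩ := w.injective hwi
        subst hieq
        have hji : ((⟨j, hjm⟩ : Fin (2 * k - 1)) : ℕ) < j := hi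
        simp only [] at hji
        omega
  have hprime : ∀ j : ℕ, (Ideal.map (Ideal.Quotient.mk I) (varIdeal K (T j))).IsPrime := by
    intro j
    haveI := varIdeal_isPrime K (T j)
    apply Ideal.map_isPrime_of_surjective hsurj
    rw [Ideal.mk_ker]
    exact hTle j
  have hcomap : ∀ j : ℕ, Ideal.comap (Ideal.Quotient.mk I)
      (Ideal.map (Ideal.Quotient.mk I) (varIdeal K (T j))) = varIdeal K (T j) := by
    intro j
    rw [Ideal.comap_map_of_surjective _ hsurj, ← RingHom.ker_eq_comap_bot, Ideal.mk_ker]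
    exact sup_eq_left.mpr (hTle j)
  refine ⟨{ length := 2 * k - 1
            toFun := fun j => ⟨Ideal.map (Ideal.Quotient.mk I) (varIdeal K (T (j : ℕ))),
              hprime _⟩
            step := fun j => ?_ }, rfl⟩
  show (_ : PrimeSpectrum (MvPolynomial V K ⧸ I)) < _
  rw [← PrimeSpectrum.asIdeal_lt_asIdeal]
  have hstep : varIdeal K (T (j.castSucc : ℕ)) < varIdeal K (T (j.succ : ℕ)) := by
    apply hTlt
    · simp [Fin.lt_def]
    · have := j.2
      simp only [Fin.val_succ]
      omega
  apply lt_of_le_of_ne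
  · exact Ideal.map_mono hstep.le
  · intro heq
    have := congrArg (Ideal.comap (Ideal.Quotient.mk I)) heq
    rw [hcomap, hcomap] at this
    exact hstep.ne this

end AuxGraph

lemma sandwich {a b : ℕ} (hab : b = a + 1) (D : WithBot ℕ∞)
    (h1 : ((a : ℕ∞) : WithBot ℕ∞) ≤ D) (h2 : D ≤ ((b : ℕ∞) : WithBot ℕ∞)) :
    D = ((a : ℕ∞) : WithBot ℕ∞) ∨ D = ((b : ℕ∞) : WithBot ℕ∞) := by
  induction D using WithBot.recBotCoe with
  | bot => exact absurd h1 (by simp)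
  | coe t =>
    rw [WithBot.coe_le_coe] at h1 h2
    induction t using WithTop.recTopCoe with
    | top =>
      exfalso
      exact absurd h2 (not_le.mpr (WithTop.coe_lt_top b))
    | coe s =>
      have h1' : a ≤ s := by
        exact WithTop.coe_le_coe.mp h1
      have h2' : s ≤ b := by
        exact WithTop.coe_le_coe.mp h2
      have hs : s = a ∨ s = b := by omega
      rcases hs with rfl | rfl
      · left; norm_cast
      · right; norm_cast

/-- for a graph `G` with a perfect matching on `2n` vertices,
`2k − 1 ≤ dim S/I(G)^{[k]} ≤ n + k − 1` for all `1 ≤ k ≤ ν(G) = n`; in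
particular for `n ≥ 2`, `dim S/I(G)^{[n−1]} ∈ {2n − 3, 2n − 2}`. -/
theorem statement_9 (G : SimpleGraph V) (n : ℕ)
    (hcard : Fintype.card V = 2 * n)
    (f : Fin n → V × V) (hf : IsMatchingOn G f)
    (hpm : ∀ v : V, ∃ i, v = (f i).1 ∨ v = (f i).2)
    (hnu : matchingNumber V G = n) :
    (∀ k : ℕ, 1 ≤ k → k ≤ n →
      (((2 * k - 1 : ℕ) : ℕ∞) : WithBot ℕ∞) ≤ ringKrullDim (Poly K V ⧸ matchPow K V G k) ∧
      ringKrullDim (Poly K V ⧸ matchPow K V G k) ≤ (((n + k - 1 : ℕ) : ℕ∞) : WithBot ℕ∞)) ∧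
    (2 ≤ n →
      (ringKrullDim (Poly K V ⧸ matchPow K V G (n - 1)) = (((2 * n - 3 : ℕ) : ℕ∞) : WithBot ℕ∞) ∨
       ringKrullDim (Poly K V ⧸ matchPow K V G (n - 1)) = (((2 * n - 2 : ℕ) : ℕ∞) : WithBot ℕ∞))) := by
  classical
  have main : ∀ k : ℕ, 1 ≤ k → k ≤ n →
      (((2 * k - 1 : ℕ) : ℕ∞) : WithBot ℕ∞) ≤ ringKrullDim (Poly K V ⧸ matchPow K V G k) ∧
      ringKrullDim (Poly K V ⧸ matchPow K V G k) ≤ (((n + k - 1 : ℕ) : ℕ∞) : WithBot ℕ∞) := by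
    intro k hk1 hkn
    constructor
    · obtain ⟨q, hq⟩ := lower_series K (G := G) hcard hk1 hkn
      have h1 := Order.LTSeries.length_le_krullDim q
      rw [hq] at h1
      exact_mod_cast h1
    · show Order.krullDim (PrimeSpectrum (Poly K V ⧸ matchPow K V G k)) ≤ _
      rw [Order.krullDim]
      apply iSup_le
      intro q
      have h1 := upper_len K hcard hk1 hkn f hf q
      exact_mod_cast Nat.cast_le.mpr h1
  refine ⟨main, ?_⟩
  intro hn2
  have h1 := main (n - 1) (by omega) (by omega)
  have e1 : 2 * (n - 1) - 1 = 2 * n - 3 := by omega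
  have e2 : n + (n - 1) - 1 = 2 * n - 2 := by omega
  rw [e1, e2] at h1
  exact sandwich (by omega) _ h1.1 h1.2


end Paper
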